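/- arXiv:1406.1635 — 5 statements merged into one kernel-verified Lean document; each statement's English description precedes it below -/
import Mathlib

section
/- There exists an absolute constant C > 0 (one may take C = 4) with the following property. Let (X, μ) be a measure space, let c₀ > 0, and let v : X → ℝ be a measurable function such that ‖v‖_{L^p(μ)} ≤ c₀ · p^{1/2} for every p ∈ [2, ∞). Then for every ξ ∈ L¹(μ) ∩ L²(μ) one has ∫ |ξ v| dμ ≤ C · c₀ · (1 + ‖ξ‖_{L¹(μ)} · (log(e + ‖ξ‖_{L²(μ)}))^{1/2}). -/
open MeasureTheory ENNReal

lemma holder3 {X : Type} [MeasurableSpace X] (μ : Measure X) (ξ v : X → ℝ)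
    (hξ : AEStronglyMeasurable ξ μ) (hv : Measurable v) {θ : ℝ} (hθ0 : 0 < θ) (hθ1 : θ < 1) :
    ∫⁻ x, (‖ξ x‖₊ : ℝ≥0∞) * ‖v x‖₊ ∂μ ≤
      (∫⁻ x, (‖ξ x‖₊ : ℝ≥0∞) ∂μ) ^ (1 - θ) *
      ((∫⁻ x, (‖ξ x‖₊ : ℝ≥0∞) ^ (2:ℝ) ∂μ) ^ ((1:ℝ)/2) *
       (∫⁻ x, (‖v x‖₊ : ℝ≥0∞) ^ (2/θ) ∂μ) ^ ((1:ℝ)/2)) ^ θ := by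
  set F : X → ℝ≥0∞ := fun x => (‖ξ x‖₊ : ℝ≥0∞) with hF
  set W : X → ℝ≥0∞ := fun x => (‖v x‖₊ : ℝ≥0∞) with hW
  have hFm : AEMeasurable F μ := hξ.aemeasurable.enorm
  have hWm : Measurable W := hv.enorm
  have hθ1' : 0 < 1 - θ := by linarith
  have hconj1 : Real.HolderConjugate (1/(1-θ)) (1/θ) := by
    constructor
    · rw [one_div, one_div, inv_inv, inv_inv, inv_one]; ring
    · exact div_pos one_pos hθ1'
    · exact div_pos one_pos hθ0
  have hconj2 : Real.HolderConjugate 2 2 := by constructor <;> norm_num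
  have step1 := ENNReal.lintegral_mul_le_Lp_mul_Lq μ hconj1
    (f := fun x => F x ^ (1-θ)) (g := fun x => F x ^ θ * W x)
    (hFm.pow_const _) ((hFm.pow_const _).mul hWm.aemeasurable)
  have e1 : ∀ x, (F x ^ (1-θ) * (F x ^ θ * W x)) = F x * W x := by
    intro x
    rw [← mul_assoc, ← ENNReal.rpow_add_of_nonneg _ _ hθ1'.le hθ0.le]
    norm_num
  have e2 : ∀ x, (F x ^ (1-θ)) ^ (1/(1-θ)) = F x := by
    intro x
    rw [← ENNReal.rpow_mul, mul_one_div_cancel hθ1'.ne', ENNReal.rpow_one]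
  have e3 : ∀ x, (F x ^ θ * W x) ^ (1/θ) = F x * W x ^ ((1:ℝ)/θ) := by
    intro x
    rw [ENNReal.mul_rpow_of_nonneg _ _ (by positivity), ← ENNReal.rpow_mul,
      mul_one_div_cancel hθ0.ne', ENNReal.rpow_one]
  simp only [Pi.mul_apply] at step1
  simp only [e1, e2, e3] at step1
  rw [one_div_one_div, one_div_one_div] at step1
  refine step1.trans (mul_le_mul_right (ENNReal.rpow_le_rpow ?_ hθ0.le) _)
  have step2 := ENNReal.lintegral_mul_le_Lp_mul_Lq μ hconj2
    (f := F) (g := fun x => W x ^ ((1:ℝ)/θ)) hFm (hWm.pow_const _).aemeasurable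
  simp only [Pi.mul_apply] at step2
  have e4 : ∀ x, (W x ^ ((1:ℝ)/θ)) ^ (2:ℝ) = W x ^ (2/θ) := by
    intro x
    rw [← ENNReal.rpow_mul]
    congr 1
    field_simp
  simp only [e4] at step2
  convert step2 using 3

set_option maxHeartbeats 1000000 in
/-- There exists an absolute constant `C > 0` (one may take `C = 4`) such that:
for any measure space `(X, μ)`, any `c₀ > 0` and any measurable `v : X → ℝ` with
`‖v‖_{L^p(μ)} ≤ c₀ p^{1/2}` for every `p ∈ [2, ∞)`, and any `ξ ∈ L¹(μ) ∩ L²(μ)`,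
one has `∫ |ξ v| dμ ≤ C c₀ (1 + ‖ξ‖_{L¹} (log (e + ‖ξ‖_{L²}))^{1/2})`. -/
theorem stmt0 :
    ∃ C : ℝ, 0 < C ∧ C = 4 ∧
      ∀ (X : Type) [MeasurableSpace X] (μ : Measure X) (c₀ : ℝ), 0 < c₀ →
        ∀ v : X → ℝ, Measurable v →
          (∀ p : ℝ, 2 ≤ p →
            eLpNorm v (ENNReal.ofReal p) μ ≤ ENNReal.ofReal (c₀ * p ^ ((1 : ℝ)/2))) →
        ∀ ξ : X → ℝ, MemLp ξ 1 μ → MemLp ξ 2 μ →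
          ∫ x, |ξ x * v x| ∂μ ≤
            C * c₀ * (1 + (eLpNorm ξ 1 μ).toReal *
              (Real.log (Real.exp 1 + (eLpNorm ξ 2 μ).toReal)) ^ ((1 : ℝ)/2)) := by
  refine ⟨4, by norm_num, rfl, ?_⟩
  intro X _ μ c₀ hc₀ v hv hvp ξ hξ1 hξ2
  have hξm := hξ1.aestronglyMeasurable
  set a := (eLpNorm ξ 1 μ).toReal with ha_def
  set b := (eLpNorm ξ 2 μ).toReal with hb_def
  have ha0 : 0 ≤ a := ENNReal.toReal_nonneg
  have hb0 : 0 ≤ b := ENNReal.toReal_nonneg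
  set L := Real.log (Real.exp 1 + b) with hL_def
  have hL1 : (1:ℝ) ≤ L := by
    rw [hL_def]
    calc (1:ℝ) = Real.log (Real.exp 1) := (Real.log_exp 1).symm
    _ ≤ _ := Real.log_le_log (Real.exp_pos 1) (by linarith)
  have hint : ∫ x, |ξ x * v x| ∂μ = (∫⁻ x, (‖ξ x‖₊ : ℝ≥0∞) * ‖v x‖₊ ∂μ).toReal := by
    simp only [← Real.norm_eq_abs]
    have h := integral_norm_eq_lintegral_enorm (hξm.mul hv.aestronglyMeasurable)
    simp only [Pi.mul_apply] at h
    rw [h]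
    congr 1
    refine lintegral_congr fun x => ?_
    rw [enorm_mul]; rfl
  have hLs : Real.log (Real.exp 1 + b) ^ ((1:ℝ)/2) = Real.sqrt L := by
    rw [Real.sqrt_eq_rpow, hL_def]
  rw [hLs]
  rcases eq_or_lt_of_le ha0 with haz | ha
  · -- a = 0 : ξ vanishes a.e.
    have h0 : eLpNorm ξ 1 μ = 0 :=
      ((ENNReal.toReal_eq_zero_iff _).mp haz.symm).resolve_right hξ1.2.ne
    have hz : ξ =ᵐ[μ] 0 := (eLpNorm_eq_zero_iff hξm one_ne_zero).mp h0
    have hz' : (fun x => |ξ x * v x|) =ᵐ[μ] 0 := by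
      filter_upwards [hz] with x hx
      simp [hx]
    rw [integral_congr_ae hz']
    simp only [Pi.zero_apply, integral_zero, ← haz, zero_mul, add_zero]
    positivity
  have hb : 0 < b := by
    rcases eq_or_lt_of_le hb0 with hbz | hb
    · exfalso
      have h2 : eLpNorm ξ 2 μ = 0 :=
        ((ENNReal.toReal_eq_zero_iff _).mp hbz.symm).resolve_right hξ2.2.ne
      have hz : ξ =ᵐ[μ] 0 := (eLpNorm_eq_zero_iff hξm two_ne_zero).mp h2
      have h1 : eLpNorm ξ 1 μ = 0 := by rw [eLpNorm_congr_ae hz, eLpNorm_zero]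
      rw [ha_def, h1, ENNReal.toReal_zero] at ha
      exact lt_irrefl _ ha
    · exact hb
  set Lt := Real.log (Real.exp 1 + b / a) with hLt_def
  have hLt1 : 1 < Lt := by
    rw [hLt_def]
    calc (1:ℝ) = Real.log (Real.exp 1) := (Real.log_exp 1).symm
    _ < _ := Real.log_lt_log (Real.exp_pos 1) (lt_add_of_pos_right _ (div_pos hb ha))
  set θ := 1/Lt with hθ_def
  have hθ0 : 0 < θ := by rw [hθ_def]; positivity
  have hθ1 : θ < 1 := by
    rw [hθ_def, div_lt_one (by linarith)]; exact hLt1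
  set p := 2/θ with hp_def
  have hp : p = 2 * Lt := by rw [hp_def, hθ_def]; field_simp
  have hp2 : 2 ≤ p := by rw [hp]; linarith
  have hp0 : 0 < p := by linarith
  -- ENNReal estimate
  have key := holder3 μ ξ v hξm hv hθ0 hθ1
  rw [← hp_def] at key
  have hN1 : (∫⁻ x, (‖ξ x‖₊ : ℝ≥0∞) ∂μ) = eLpNorm ξ 1 μ :=
    (eLpNorm_one_eq_lintegral_enorm (f := ξ) (μ := μ)).symm
  have hN2 : ((∫⁻ x, (‖ξ x‖₊ : ℝ≥0∞) ^ (2:ℝ) ∂μ) ^ ((1:ℝ)/2)) = eLpNorm ξ 2 μ := by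
    rw [eLpNorm_eq_lintegral_rpow_enorm_toReal two_ne_zero ENNReal.ofNat_ne_top]
    norm_num
    rfl
  have hV : ((∫⁻ x, (‖v x‖₊ : ℝ≥0∞) ^ p ∂μ) ^ ((1:ℝ)/p)) = eLpNorm v (ENNReal.ofReal p) μ := by
    rw [eLpNorm_eq_lintegral_rpow_enorm_toReal (ne_of_gt (ENNReal.ofReal_pos.mpr hp0))
      ENNReal.ofReal_ne_top, ENNReal.toReal_ofReal hp0.le]
    rfl
  have hexp : ((1:ℝ)/2) * θ = 1/p := by
    rw [hp_def]; field_simp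
  have key2 : (∫⁻ x, (‖ξ x‖₊ : ℝ≥0∞) * ‖v x‖₊ ∂μ) ≤
      eLpNorm ξ 1 μ ^ (1-θ) * (eLpNorm ξ 2 μ ^ θ *
        ENNReal.ofReal (c₀ * p ^ ((1:ℝ)/2))) := by
    refine key.trans ?_
    have hSp : ((∫⁻ x, (‖v x‖₊ : ℝ≥0∞) ^ p ∂μ) ^ ((1:ℝ)/2)) ^ θ ≤
        ENNReal.ofReal (c₀ * p ^ ((1:ℝ)/2)) := by
      rw [← ENNReal.rpow_mul, hexp, hV]
      exact hvp p hp2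
    rw [hN1, ENNReal.mul_rpow_of_nonneg _ _ hθ0.le, hN2]
    exact mul_le_mul_right (mul_le_mul_right hSp _) _
  have hr0 : 0 ≤ c₀ * p ^ ((1:ℝ)/2) := by positivity
  have hfin : eLpNorm ξ 1 μ ^ (1-θ) * (eLpNorm ξ 2 μ ^ θ *
      ENNReal.ofReal (c₀ * p ^ ((1:ℝ)/2))) ≠ ⊤ :=
    ENNReal.mul_ne_top (ENNReal.rpow_ne_top_of_nonneg (by linarith) hξ1.2.ne)
      (ENNReal.mul_ne_top (ENNReal.rpow_ne_top_of_nonneg hθ0.le hξ2.2.ne)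
        ENNReal.ofReal_ne_top)
  have main : ∫ x, |ξ x * v x| ∂μ ≤ a ^ (1-θ) * (b ^ θ * (c₀ * p ^ ((1:ℝ)/2))) := by
    rw [hint]
    refine (ENNReal.toReal_mono hfin key2).trans_eq ?_
    rw [ENNReal.toReal_mul, ENNReal.toReal_mul, ← ENNReal.toReal_rpow,
      ← ENNReal.toReal_rpow, ENNReal.toReal_ofReal hr0]
  refine main.trans ?_
  -- now a purely real estimate
  have habθ : a ^ (1-θ) * b ^ θ ≤ a * Real.exp 1 := by
    have h1 : a ^ (1-θ) = a / a ^ θ := by rw [Real.rpow_sub ha, Real.rpow_one]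
    have h2 : b ^ θ ≤ (Real.exp 1 + b/a) ^ θ * a ^ θ := by
      rw [← Real.mul_rpow (by positivity) ha0]
      have hq : (Real.exp 1 + b/a) * a = Real.exp 1 * a + b := by
        field_simp
      rw [hq]
      refine Real.rpow_le_rpow hb0 ?_ hθ0.le
      nlinarith [Real.exp_pos 1]
    have h3 : (Real.exp 1 + b/a) ^ θ = Real.exp 1 := by
      rw [Real.rpow_def_of_pos (by positivity), hθ_def, mul_one_div,
        div_self (ne_of_gt (by linarith : (0:ℝ) < Lt))]
    calc a ^ (1-θ) * b ^ θ ≤ a ^ (1-θ) * ((Real.exp 1 + b/a) ^ θ * a ^ θ) := by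
          refine mul_le_mul_of_nonneg_left h2 (by positivity)
      _ = a * (Real.exp 1 + b/a) ^ θ := by
          have haθ : a ^ θ ≠ 0 := by positivity
          rw [h1]
          rw [show a / a^θ * ((Real.exp 1 + b/a) ^ θ * a ^ θ)
            = a * (Real.exp 1 + b/a) ^ θ * (a ^ θ / a ^ θ) by ring, div_self haθ, mul_one]
      _ = a * Real.exp 1 := by rw [h3]
  have hsplit : p ^ ((1:ℝ)/2) = Real.sqrt 2 * Real.sqrt Lt := by
    rw [← Real.sqrt_eq_rpow, hp, Real.sqrt_mul (by norm_num)]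
  have he4 : Real.sqrt 2 * Real.exp 1 ≤ 4 := by
    nlinarith [Real.sq_sqrt (by norm_num : (0:ℝ) ≤ 2), Real.sqrt_nonneg 2,
      Real.exp_one_lt_d9, Real.exp_pos 1,
      sq_nonneg (Real.sqrt 2 * Real.exp 1 - 4)]
  have hclaim : a * Real.sqrt Lt ≤ 1 + a * Real.sqrt L := by
    rcases le_or_gt 1 a with ha1 | ha1
    · have hle : Lt ≤ L := by
        rw [hLt_def, hL_def]
        exact Real.log_le_log (by positivity)
          (add_le_add_right (div_le_self hb0 ha1) _)
      have := Real.sqrt_le_sqrt hle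
      nlinarith [Real.sqrt_nonneg Lt]
    · set t := -Real.log a with ht_def
      have ht0 : 0 ≤ t := by
        rw [ht_def]; nlinarith [Real.log_neg ha ha1]
      have hLt_le : Lt ≤ L + t := by
        have h5 : Real.exp 1 + b/a ≤ (Real.exp 1 + b)/a := by
          rw [add_div]
          have : Real.exp 1 ≤ Real.exp 1 / a := by
            rw [le_div_iff₀ ha]; nlinarith [Real.exp_pos 1]
          linarith
        calc Lt ≤ Real.log ((Real.exp 1 + b)/a) := by
              rw [hLt_def]; exact Real.log_le_log (by positivity) h5
          _ = L + t := by
              rw [Real.log_div (by positivity) ha.ne', hL_def, ht_def]; ring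
      have hs : Real.sqrt Lt ≤ Real.sqrt L + Real.sqrt t := by
        have h6 : Real.sqrt (L + t) ≤ Real.sqrt L + Real.sqrt t := by
          rw [show Real.sqrt L + Real.sqrt t
              = Real.sqrt ((Real.sqrt L + Real.sqrt t)^2) from
              (Real.sqrt_sq (by positivity)).symm]
          refine Real.sqrt_le_sqrt ?_
          nlinarith [Real.sq_sqrt (by linarith : (0:ℝ) ≤ L), Real.sq_sqrt ht0,
            Real.sqrt_nonneg L, Real.sqrt_nonneg t]
        exact (Real.sqrt_le_sqrt hLt_le).trans h6
      have hat : a * Real.sqrt t ≤ 1 := by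
        have h7 : t ≤ (Real.exp 1 * a)⁻¹ := by
          have h7' := Real.log_le_sub_one_of_pos
            (show (0:ℝ) < (Real.exp 1 * a)⁻¹ by positivity)
          rw [Real.log_inv, Real.log_mul (ne_of_gt (Real.exp_pos 1)) ha.ne',
            Real.log_exp] at h7'
          rw [ht_def]; linarith
        have h8 : (a * Real.sqrt t)^2 ≤ 1 := by
          rw [mul_pow, Real.sq_sqrt ht0]
          have h9 : a^2 * t ≤ a^2 * (Real.exp 1 * a)⁻¹ :=
            mul_le_mul_of_nonneg_left h7 (sq_nonneg a)
          have h10 : a^2 * (Real.exp 1 * a)⁻¹ = a / Real.exp 1 := by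
            field_simp [ha.ne']
          have h11 : a / Real.exp 1 ≤ 1 := by
            rw [div_le_one (Real.exp_pos 1)]
            nlinarith [Real.exp_one_gt_d9]
          nlinarith
        nlinarith [mul_nonneg ha0 (Real.sqrt_nonneg t),
          sq_nonneg (a * Real.sqrt t - 1)]
      have hms := mul_le_mul_of_nonneg_left hs ha0
      nlinarith
  rw [hsplit]
  have hLt0 : 0 ≤ Real.sqrt Lt := Real.sqrt_nonneg Lt
  have hL0 : 0 ≤ Real.sqrt L := Real.sqrt_nonneg L
  have hstep : a ^ (1-θ) * (b ^ θ * (c₀ * (Real.sqrt 2 * Real.sqrt Lt)))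
      = (a ^ (1-θ) * b ^ θ) * c₀ * (Real.sqrt 2 * Real.sqrt Lt) := by ring
  rw [hstep]
  have hbθ0 : 0 ≤ a ^ (1-θ) * b ^ θ := by positivity
  have h12 : (a ^ (1-θ) * b ^ θ) * c₀ * (Real.sqrt 2 * Real.sqrt Lt)
      ≤ (a * Real.exp 1) * c₀ * (Real.sqrt 2 * Real.sqrt Lt) := by
    have : 0 ≤ Real.sqrt 2 * Real.sqrt Lt := by positivity
    nlinarith [mul_le_mul_of_nonneg_right habθ hc₀.le]
  refine h12.trans ?_
  have h13 : (a * Real.exp 1) * c₀ * (Real.sqrt 2 * Real.sqrt Lt)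
      = (Real.sqrt 2 * Real.exp 1) * c₀ * (a * Real.sqrt Lt) := by ring
  rw [h13]
  have h14 : (Real.sqrt 2 * Real.exp 1) * c₀ * (a * Real.sqrt Lt)
      ≤ 4 * c₀ * (a * Real.sqrt Lt) := by
    have h15 : 0 ≤ a * Real.sqrt Lt := by positivity
    exact mul_le_mul_of_nonneg_right (mul_le_mul_of_nonneg_right he4 hc₀.le) h15
  refine h14.trans ?_
  have h16 : 4 * c₀ * (a * Real.sqrt Lt) ≤ 4 * c₀ * (1 + a * Real.sqrt L) := by
    nlinarith
  exact h16
end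

section
/- Let c ≥ 0, A > 0, B > 0 and X ≥ 0 be real numbers such that X ≤ c · p^{1/2} · A^{(p−2)/p} · B^{2/p} for every p ∈ [2, ∞). Then X ≤ 2 · e^{1/2} · c · A · (log(e + B/A))^{1/2}. -/
/-- If `X ≤ c p^{1/2} A^{(p-2)/p} B^{2/p}` for all `p ∈ [2, ∞)`, then
`X ≤ 2 e^{1/2} c A (log (e + B/A))^{1/2}` (Yudovich optimization over `p`). -/
theorem stmt1 (c A B X : ℝ) (hc : 0 ≤ c) (hA : 0 < A) (hB : 0 < B) (hX : 0 ≤ X)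
    (h : ∀ p : ℝ, 2 ≤ p → X ≤ c * p ^ ((1 : ℝ)/2) * A ^ ((p - 2)/p) * B ^ ((2 : ℝ)/p)) :
    X ≤ 2 * Real.exp (1/2) * c * A * (Real.log (Real.exp 1 + B / A)) ^ ((1 : ℝ)/2) := by
  set L : ℝ := Real.log (Real.exp 1 + B / A) with hLdef
  have hpos : (0:ℝ) < Real.exp 1 + B / A := by positivity
  have hL1 : 1 ≤ L := by
    have hba : 0 < B / A := by positivity
    have := Real.log_le_log (Real.exp_pos 1) (by linarith : Real.exp 1 ≤ Real.exp 1 + B / A)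
    simpa [Real.log_exp] using this
  have hLpos : 0 < L := by linarith
  set p : ℝ := 4 * L with hpdef
  have hp2 : 2 ≤ p := by nlinarith
  have hppos : 0 < p := by linarith
  have key := h p hp2
  -- p^{1/2} = 2 * L^{1/2}
  have h4 : (4:ℝ) ^ ((1:ℝ)/2) = 2 := by
    rw [show (4:ℝ) = 2 ^ (2:ℝ) by norm_num [← Real.rpow_natCast 2 2],
      ← Real.rpow_mul (by norm_num : (0:ℝ) ≤ 2)]
    norm_num
  have hpsqrt : p ^ ((1:ℝ)/2) = 2 * L ^ ((1:ℝ)/2) := by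
    rw [hpdef, Real.mul_rpow (by norm_num) hLpos.le, h4]
  -- A^{(p-2)/p} * B^{2/p} = A * (B/A)^{2/p}
  have hAB : A ^ ((p - 2)/p) * B ^ ((2:ℝ)/p) = A * (B / A) ^ ((2:ℝ)/p) := by
    rw [show (p - 2)/p = 1 - 2/p by field_simp, Real.rpow_sub hA, Real.rpow_one,
      Real.div_rpow hB.le hA.le]
    ring
  -- (B/A)^{2/p} ≤ exp (1/2)
  have hbound : (B / A) ^ ((2:ℝ)/p) ≤ Real.exp (1/2) := by
    have hle : B / A ≤ Real.exp L := by
      rw [hLdef, Real.exp_log hpos]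
      have := Real.exp_pos 1
      linarith
    calc (B / A) ^ ((2:ℝ)/p) ≤ (Real.exp L) ^ ((2:ℝ)/p) :=
          Real.rpow_le_rpow (by positivity) hle (by positivity)
      _ = Real.exp (L * (2/p)) := by rw [← Real.exp_mul]
      _ = Real.exp (1/2) := by
          congr 1
          rw [hpdef]; field_simp; ring
  have hLs : 0 ≤ L ^ ((1:ℝ)/2) := Real.rpow_nonneg hLpos.le _
  calc X ≤ c * p ^ ((1:ℝ)/2) * A ^ ((p - 2)/p) * B ^ ((2:ℝ)/p) := key
    _ = c * (2 * L ^ ((1:ℝ)/2)) * (A * (B / A) ^ ((2:ℝ)/p)) := by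
        rw [hpsqrt, mul_assoc, hAB]
    _ ≤ c * (2 * L ^ ((1:ℝ)/2)) * (A * Real.exp (1/2)) := by
        apply mul_le_mul_of_nonneg_left
        · exact mul_le_mul_of_nonneg_left hbound hA.le
        · positivity
    _ = 2 * Real.exp (1/2) * c * A * L ^ ((1:ℝ)/2) := by ring
end

section
/- For every real number A > 0 there exists p ∈ [2, ∞) such that p · A^{−4/p} ≤ 4 e · log(e + 1/A). -/
/-- For every `A > 0` there exists `p ∈ [2, ∞)` with
`p A^{-4/p} ≤ 4 e log (e + 1/A)`. -/
theorem stmt5 (A : ℝ) (hA : 0 < A) :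
    ∃ p : ℝ, 2 ≤ p ∧ p * A ^ (-4/p) ≤ 4 * Real.exp 1 * Real.log (Real.exp 1 + 1/A) := by
  set L : ℝ := -Real.log A with hL
  have hAinv : (0:ℝ) < 1/A := by positivity
  have hlog1 : (1:ℝ) ≤ Real.log (Real.exp 1 + 1/A) := by
    calc (1:ℝ) = Real.log (Real.exp 1) := (Real.log_exp 1).symm
    _ ≤ Real.log (Real.exp 1 + 1/A) :=
      Real.log_le_log (Real.exp_pos 1) (by linarith)
  by_cases hc : (1:ℝ)/2 ≤ L
  · refine ⟨4 * L, by linarith, ?_⟩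
    have hLpos : 0 < L := by linarith
    have hp : (0:ℝ) < 4 * L := by linarith
    have hpow : A ^ (-4/(4*L)) = Real.exp 1 := by
      rw [Real.rpow_def_of_pos hA]
      congr 1
      have hlogA : Real.log A ≠ 0 := by
        intro h; rw [hL, h] at hLpos; simp at hLpos
      field_simp [hL]
      ring
    rw [hpow]
    have hlogL : L ≤ Real.log (Real.exp 1 + 1/A) := by
      have h1 : L = Real.log (1/A) := by rw [Real.log_div one_ne_zero hA.ne']; simp [hL]
      rw [h1]
      exact Real.log_le_log hAinv (by linarith [Real.exp_pos 1])
    nlinarith [Real.exp_pos 1]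
  · refine ⟨2, le_refl 2, ?_⟩
    push_neg at hc
    have hpow : A ^ (-4/(2:ℝ)) = Real.exp (2 * L) := by
      rw [Real.rpow_def_of_pos hA]
      congr 1
      rw [hL]; ring
    rw [hpow]
    have h1 : Real.exp (2 * L) ≤ Real.exp 1 := Real.exp_le_exp.mpr (by linarith)
    nlinarith [Real.exp_pos 1]
end

section
/- Let T > 0, let Z : [0, T] → ℝ be differentiable with Z(t) ≥ e for every t ∈ [0, T], and let m : [0, T] → ℝ be nonnegative and integrable such that Z'(t) ≤ m(t) · Z(t) · log Z(t) for every t ∈ [0, T]. Then for every t ∈ [0, T] one has Z(t) ≤ Z(0)^{exp(∫₀ᵗ m(s) ds)}. -/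
open MeasureTheory

/-- Logarithmic Gronwall lemma: if `Z` is differentiable on `[0, T]` with
`Z ≥ e` and `Z' ≤ m Z log Z` on `[0, T]`, where `m ≥ 0` is integrable on
`[0, T]`, then `Z(t) ≤ Z(0)^{exp(∫₀ᵗ m)}` for every `t ∈ [0, T]`. -/
theorem stmt12 (T : ℝ) (hT : 0 < T) (Z Z' m : ℝ → ℝ)
    (hZdiff : ∀ t ∈ Set.Icc (0 : ℝ) T, HasDerivAt Z (Z' t) t)
    (hZe : ∀ t ∈ Set.Icc (0 : ℝ) T, Real.exp 1 ≤ Z t)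
    (hm0 : ∀ t ∈ Set.Icc (0 : ℝ) T, 0 ≤ m t)
    (hmint : IntegrableOn m (Set.Icc (0 : ℝ) T))
    (hineq : ∀ t ∈ Set.Icc (0 : ℝ) T, Z' t ≤ m t * Z t * Real.log (Z t)) :
    ∀ t ∈ Set.Icc (0 : ℝ) T, Z t ≤ Z 0 ^ Real.exp (∫ s in (0 : ℝ)..t, m s) := by
  intro t ht
  -- basic facts on [0, T]
  have hZpos : ∀ x ∈ Set.Icc (0 : ℝ) T, 0 < Z x := fun x hx =>
    lt_of_lt_of_le (Real.exp_pos 1) (hZe x hx)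
  have hlog1 : ∀ x ∈ Set.Icc (0 : ℝ) T, 1 ≤ Real.log (Z x) := by
    intro x hx
    have := Real.log_le_log (Real.exp_pos 1) (hZe x hx)
    rwa [Real.log_exp] at this
  have hlogpos : ∀ x ∈ Set.Icc (0 : ℝ) T, 0 < Real.log (Z x) := fun x hx =>
    lt_of_lt_of_le one_pos (hlog1 x hx)
  -- W = log (log Z)
  set W : ℝ → ℝ := fun x => Real.log (Real.log (Z x)) with hW
  set W' : ℝ → ℝ := fun x => Z' x / (Z x * Real.log (Z x)) with hW'
  have hWd : ∀ x ∈ Set.Icc (0 : ℝ) T, HasDerivAt W (W' x) x := by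
    intro x hx
    have h1 : HasDerivAt (fun y => Real.log (Z y)) (Z' x / Z x) x := by
      have := (Real.hasDerivAt_log (hZpos x hx).ne').comp x (hZdiff x hx)
      simpa [div_eq_inv_mul, Function.comp_def] using this
    have h2 := (Real.hasDerivAt_log (hlogpos x hx).ne').comp x h1
    have : (Real.log (Z x))⁻¹ * (Z' x / Z x) = W' x := by
      show (Real.log (Z x))⁻¹ * (Z' x / Z x) = Z' x / (Z x * Real.log (Z x))
      rw [inv_mul_eq_div, div_div]
    simpa [this, Function.comp_def] using h2
  have hW'le : ∀ x ∈ Set.Icc (0 : ℝ) T, W' x ≤ m x := by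
    intro x hx
    have hpos : 0 < Z x * Real.log (Z x) := mul_pos (hZpos x hx) (hlogpos x hx)
    rw [hW', div_le_iff₀ hpos]
    calc Z' x ≤ m x * Z x * Real.log (Z x) := hineq x hx
      _ = m x * (Z x * Real.log (Z x)) := by ring
  -- apply the FTC inequality on [0, t]
  have hsub : Set.Icc (0 : ℝ) t ⊆ Set.Icc (0 : ℝ) T :=
    Set.Icc_subset_Icc le_rfl ht.2
  have key : W t - W 0 ≤ ∫ s in (0 : ℝ)..t, m s := by
    apply intervalIntegral.sub_le_integral_of_hasDeriv_right_of_le ht.1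
    · exact fun x hx => ((hWd x (hsub hx)).continuousAt).continuousWithinAt
    · intro x hx
      exact ((hWd x (hsub (Set.mem_Icc.2 ⟨hx.1.le, hx.2.le⟩))).hasDerivWithinAt)
    · exact hmint.mono_set hsub
    · intro x hx
      exact hW'le x (hsub (Set.mem_Icc.2 ⟨hx.1.le, hx.2.le⟩))
  -- unfold: log log Z t ≤ log log Z 0 + ∫ m
  have h0T : (0 : ℝ) ∈ Set.Icc (0 : ℝ) T := ⟨le_rfl, hT.le⟩
  set I : ℝ := ∫ s in (0 : ℝ)..t, m s
  have h1 : Real.log (Real.log (Z t)) ≤ Real.log (Real.log (Z 0)) + I := by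
    have := key; simp only [hW] at this; linarith
  have h2 : Real.log (Z t) ≤ Real.log (Z 0) * Real.exp I := by
    have := Real.exp_le_exp.2 h1
    rwa [Real.exp_log (hlogpos t ht), Real.exp_add, Real.exp_log (hlogpos 0 h0T)] at this
  have h3 : Z t ≤ Real.exp (Real.log (Z 0) * Real.exp I) := by
    calc Z t = Real.exp (Real.log (Z t)) := (Real.exp_log (hZpos t ht)).symm
      _ ≤ _ := Real.exp_le_exp.2 h2
  rwa [← Real.rpow_def_of_pos (hZpos 0 h0T)] at h3
end

section
/- Let T > 0 and c ≥ 0, let Y₁, Y₂ : [0, T] → ℝ be nonnegative differentiable functions with Y₁ integrable on (0, T), and let M₅, M₆ : [0, T] → ℝ be nonnegative integrable functions such that Y₁'(t) + Y₂'(t) ≤ M₅(t) · Y₁(t) + M₆(t) + c · Y₁(t)² · log(e + Y₁(t)) for every t ∈ [0, T]. Then for every t ∈ [0, T] one has e + Y₁(t) + Y₂(t) ≤ (e + Y₁(0) + Y₂(0))^{exp(∫₀ᵗ (M₅(s) + M₆(s)/e + c · Y₁(s)) ds)}. -/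
open MeasureTheory

/-- If `Y₁, Y₂ ≥ 0` are differentiable on `[0, T]`, `Y₁` is integrable on
`(0, T)`, `M₅, M₆ ≥ 0` are integrable, and
`Y₁' + Y₂' ≤ M₅ Y₁ + M₆ + c Y₁² log (e + Y₁)` on `[0, T]`, then for every
`t ∈ [0, T]`,
`e + Y₁(t) + Y₂(t) ≤ (e + Y₁(0) + Y₂(0))^{exp(∫₀ᵗ (M₅ + M₆/e + c Y₁))}`. -/
theorem stmt13 (T c : ℝ) (hT : 0 < T) (hc : 0 ≤ c)
    (Y₁ Y₂ Y₁' Y₂' M₅ M₆ : ℝ → ℝ)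
    (hY₁diff : ∀ t ∈ Set.Icc (0 : ℝ) T, HasDerivAt Y₁ (Y₁' t) t)
    (hY₂diff : ∀ t ∈ Set.Icc (0 : ℝ) T, HasDerivAt Y₂ (Y₂' t) t)
    (hY₁0 : ∀ t ∈ Set.Icc (0 : ℝ) T, 0 ≤ Y₁ t)
    (hY₂0 : ∀ t ∈ Set.Icc (0 : ℝ) T, 0 ≤ Y₂ t)
    (hY₁int : IntegrableOn Y₁ (Set.Ioo (0 : ℝ) T))
    (hM₅0 : ∀ t ∈ Set.Icc (0 : ℝ) T, 0 ≤ M₅ t)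
    (hM₆0 : ∀ t ∈ Set.Icc (0 : ℝ) T, 0 ≤ M₆ t)
    (hM₅int : IntegrableOn M₅ (Set.Icc (0 : ℝ) T))
    (hM₆int : IntegrableOn M₆ (Set.Icc (0 : ℝ) T))
    (hineq : ∀ t ∈ Set.Icc (0 : ℝ) T,
      Y₁' t + Y₂' t ≤ M₅ t * Y₁ t + M₆ t + c * Y₁ t ^ 2 * Real.log (Real.exp 1 + Y₁ t)) :
    ∀ t ∈ Set.Icc (0 : ℝ) T,
      Real.exp 1 + Y₁ t + Y₂ t ≤
        (Real.exp 1 + Y₁ 0 + Y₂ 0) ^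
          Real.exp (∫ s in (0 : ℝ)..t, (M₅ s + M₆ s / Real.exp 1 + c * Y₁ s)) := by
  intro t ht
  set Z : ℝ → ℝ := fun s => Real.exp 1 + Y₁ s + Y₂ s with hZdef
  have hZe : ∀ s ∈ Set.Icc (0 : ℝ) T, Real.exp 1 ≤ Z s := by
    intro s hs
    have := hY₁0 s hs; have := hY₂0 s hs
    simp only [hZdef]; linarith
  have hZpos : ∀ s ∈ Set.Icc (0 : ℝ) T, 0 < Z s := fun s hs =>
    lt_of_lt_of_le (Real.exp_pos 1) (hZe s hs)
  have hlogZ : ∀ s ∈ Set.Icc (0 : ℝ) T, 1 ≤ Real.log (Z s) := by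
    intro s hs
    exact (Real.le_log_iff_exp_le (hZpos s hs)).2 (hZe s hs)
  have hZderiv : ∀ s ∈ Set.Icc (0 : ℝ) T, HasDerivAt Z (Y₁' s + Y₂' s) s := by
    intro s hs
    have := ((hY₁diff s hs).const_add (Real.exp 1)).add (hY₂diff s hs); exact this
  set W : ℝ → ℝ := fun s => Real.log (Real.log (Z s)) with hWdef
  have hWderiv : ∀ s ∈ Set.Icc (0 : ℝ) T,
      HasDerivAt W ((Y₁' s + Y₂' s) / (Z s * Real.log (Z s))) s := by
    intro s hs
    have h1 : Z s ≠ 0 := (hZpos s hs).ne'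
    have h2 : Real.log (Z s) ≠ 0 := by
      have := hlogZ s hs; linarith
    have hlog1 : HasDerivAt (fun x => Real.log (Z x)) ((Y₁' s + Y₂' s) / Z s) s := by
      rw [div_eq_inv_mul]; have := (Real.hasDerivAt_log h1).comp s (hZderiv s hs); exact this
    have hlog2 : HasDerivAt W ((Real.log (Z s))⁻¹ * ((Y₁' s + Y₂' s) / Z s)) s :=
      by have := (Real.hasDerivAt_log h2).comp s hlog1; exact this
    convert hlog2 using 1
    rw [inv_mul_eq_div, div_div, mul_comm]
  set g : ℝ → ℝ := fun s => M₅ s + M₆ s / Real.exp 1 + c * Y₁ s with hgdef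
  -- pointwise bound W' ≤ g on Icc 0 T
  have hkey : ∀ s ∈ Set.Icc (0 : ℝ) T,
      (Y₁' s + Y₂' s) / (Z s * Real.log (Z s)) ≤ g s := by
    intro s hs
    have hZs := hZe s hs
    have hZp := hZpos s hs
    have hlZ := hlogZ s hs
    have hY1 := hY₁0 s hs
    have hY2 := hY₂0 s hs
    have hM5 := hM₅0 s hs
    have hM6 := hM₆0 s hs
    have hY1Z : Y₁ s ≤ Z s := by simp only [hZdef]; nlinarith [Real.exp_pos 1]
    have heY1Z : Real.exp 1 + Y₁ s ≤ Z s := by simp only [hZdef]; linarith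
    have hloglog : Real.log (Real.exp 1 + Y₁ s) ≤ Real.log (Z s) :=
      Real.log_le_log (by positivity) heY1Z
    have hloglog0 : (0:ℝ) ≤ Real.log (Real.exp 1 + Y₁ s) := by
      have h1e : (1:ℝ) ≤ Real.exp 1 := Real.one_le_exp zero_le_one
      exact Real.log_nonneg (by linarith)
    have hpos : 0 < Z s * Real.log (Z s) := by positivity
    rw [div_le_iff₀ hpos]
    have h1 := hineq s hs
    have hZZ : Z s ≤ Z s * Real.log (Z s) := le_mul_of_one_le_right hZp.le hlZ
    have hZlZ : Real.exp 1 ≤ Z s * Real.log (Z s) := hZs.trans hZZ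
    have e1 : M₅ s * Y₁ s ≤ M₅ s * (Z s * Real.log (Z s)) :=
      mul_le_mul_of_nonneg_left (hY1Z.trans hZZ) hM5
    have e2 : M₆ s ≤ M₆ s / Real.exp 1 * (Z s * Real.log (Z s)) := by
      rw [div_mul_eq_mul_div, le_div_iff₀ (Real.exp_pos 1)]
      exact mul_le_mul_of_nonneg_left hZlZ hM6
    have e3 : c * Y₁ s ^ 2 * Real.log (Real.exp 1 + Y₁ s) ≤
        c * Y₁ s * (Z s * Real.log (Z s)) := by
      have h4 : Y₁ s * Real.log (Real.exp 1 + Y₁ s) ≤ Z s * Real.log (Z s) :=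
        mul_le_mul hY1Z hloglog hloglog0 hZp.le
      calc c * Y₁ s ^ 2 * Real.log (Real.exp 1 + Y₁ s)
          = c * Y₁ s * (Y₁ s * Real.log (Real.exp 1 + Y₁ s)) := by ring
        _ ≤ c * Y₁ s * (Z s * Real.log (Z s)) :=
            mul_le_mul_of_nonneg_left h4 (mul_nonneg hc hY1)
    have hring : (M₅ s + M₆ s / Real.exp 1 + c * Y₁ s) * (Z s * Real.log (Z s)) =
        M₅ s * (Z s * Real.log (Z s)) + M₆ s / Real.exp 1 * (Z s * Real.log (Z s)) +
        c * Y₁ s * (Z s * Real.log (Z s)) := by ring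
    simp only [hgdef]
    rw [hring]
    exact h1.trans (add_le_add (add_le_add e1 e2) e3)
  -- integrability of g on Icc 0 t
  have hsub : Set.Icc (0:ℝ) t ⊆ Set.Icc (0:ℝ) T := Set.Icc_subset_Icc le_rfl ht.2
  have hY₁intIcc : IntegrableOn Y₁ (Set.Icc (0 : ℝ) T) :=
    (integrableOn_Icc_iff_integrableOn_Ioo).2 hY₁int
  have hgint : IntegrableOn g (Set.Icc (0:ℝ) t) := by
    apply Integrable.add
    apply Integrable.add
    · exact hM₅int.mono_set hsub
    · exact (hM₆int.mono_set hsub).div_const _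
    · exact (hY₁intIcc.mono_set hsub).const_mul _
  -- FTC inequality
  have hWmono : W t - W 0 ≤ ∫ s in (0:ℝ)..t, g s := by
    apply intervalIntegral.sub_le_integral_of_hasDeriv_right_of_le ht.1
    · intro x hx
      exact ((hWderiv x (hsub hx)).continuousAt).continuousWithinAt
    · intro x hx
      exact (hWderiv x (hsub ⟨hx.1.le, hx.2.le⟩)).hasDerivWithinAt
    · exact hgint
    · intro x hx
      exact hkey x (hsub ⟨hx.1.le, hx.2.le⟩)
  have h0T : (0:ℝ) ∈ Set.Icc (0:ℝ) T := ⟨le_rfl, hT.le⟩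
  have hlogZt_pos : 0 < Real.log (Z t) := lt_of_lt_of_le one_pos (hlogZ t ht)
  have hlogZ0_pos : 0 < Real.log (Z 0) := lt_of_lt_of_le one_pos (hlogZ 0 h0T)
  -- exponentiate once
  have step1 : Real.log (Z t) ≤ Real.log (Z 0) * Real.exp (∫ s in (0:ℝ)..t, g s) := by
    have h1 : W t ≤ W 0 + ∫ s in (0:ℝ)..t, g s := by linarith
    have h2 : Real.exp (W t) ≤ Real.exp (W 0 + ∫ s in (0:ℝ)..t, g s) := Real.exp_le_exp.2 h1
    rw [Real.exp_add] at h2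
    simpa only [hWdef, Real.exp_log hlogZt_pos, Real.exp_log hlogZ0_pos] using h2
  -- exponentiate twice
  have step2 : Z t ≤ Z 0 ^ Real.exp (∫ s in (0:ℝ)..t, g s) := by
    rw [Real.rpow_def_of_pos (hZpos 0 h0T)]
    calc Z t = Real.exp (Real.log (Z t)) := (Real.exp_log (hZpos t ht)).symm
      _ ≤ Real.exp (Real.log (Z 0) * Real.exp (∫ s in (0:ℝ)..t, g s)) :=
          Real.exp_le_exp.2 step1
  simpa [hZdef, hgdef] using step2
end
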